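/- Let 0 < γ ≤ 1, ρ ∈ (0,1) and A ≥ γ. Define ρ₀ : ℝ → [0,1] by ρ₀(u) = ρ for u < 0, ρ₀(u) = 0 for 0 ≤ u < A−γ, ρ₀(u) = (u − A + γ)/(2γ) for A−γ ≤ u < A−γ+2ργ, and ρ₀(u) = ρ for u ≥ A−γ+2ργ. Then ∫_ℝ h_ρ(ρ₀(u)) du = −A·log(1−ρ) − γρ. -/

import Mathlib

open MeasureTheory

/-- `h_ρ(z) = z log(z/ρ) + (1-z) log((1-z)/(1-ρ))` (with `0 log 0 = 0`,
which holds automatically since `Real.log 0 = 0`). -/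
noncomputable def hRho (ρ z : ℝ) : ℝ :=
  z * Real.log (z / ρ) + (1 - z) * Real.log ((1 - z) / (1 - ρ))

/-- The initial profile used in the lower bound for `A ≥ γ`. -/
noncomputable def prof16 (γ ρ A u : ℝ) : ℝ :=
  if u < 0 then ρ
  else if u < A - γ then 0
  else if u < A - γ + 2 * ρ * γ then (u - A + γ) / (2 * γ)
  else ρ

/-- Antiderivative of `hRho ρ`. -/
noncomputable def H16 (ρ z : ℝ) : ℝ :=
  (z ^ 2 / 2 * Real.log z - z ^ 2 / 4) - z ^ 2 / 2 * Real.log ρ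
    - ((1 - z) ^ 2 / 2 * Real.log (1 - z) - (1 - z) ^ 2 / 4)
    + (1 - z) ^ 2 / 2 * Real.log (1 - ρ)

lemma aux16 {w : ℝ} (hw : w ≠ 0) :
    HasDerivAt (fun w : ℝ => w ^ 2 / 2 * Real.log w - w ^ 2 / 4) (w * Real.log w) w := by
  have h2 := ((hasDerivAt_pow 2 w).div_const 2).mul (Real.hasDerivAt_log hw)
  have h3 := (hasDerivAt_pow 2 w).div_const 4
  refine (h2.sub h3).congr_deriv ?_
  norm_num
  field_simp
  ring

lemma H16_deriv (ρ : ℝ) {z : ℝ} (hz : 0 < z) (hz1 : z < 1) :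
    HasDerivAt (H16 ρ)
      (z * Real.log z - z * Real.log ρ +
        ((1 - z) * Real.log (1 - z) - (1 - z) * Real.log (1 - ρ))) z := by
  have hw : (1 : ℝ) - z ≠ 0 := ne_of_gt (by linarith)
  have hlin : HasDerivAt (fun z : ℝ => 1 - z) (-1) z := by
    simpa using (hasDerivAt_id z).const_sub (1 : ℝ)
  have h1 := aux16 hz.ne'
  have h2 := (aux16 hw).comp z hlin
  have h3 := ((hasDerivAt_pow 2 z).div_const 2).mul_const (Real.log ρ)
  have h4 := (((hasDerivAt_pow 2 (1 - z)).comp z hlin).div_const 2).mul_const (Real.log (1 - ρ))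
  have h := ((h1.sub h3).sub h2).add h4
  have hd : z * Real.log z - z * Real.log ρ +
      ((1 - z) * Real.log (1 - z) - (1 - z) * Real.log (1 - ρ))
      = z * Real.log z - 2 * z ^ 1 / 2 * Real.log ρ - (1 - z) * Real.log (1 - z) * (-1)
        + 2 * (1 - z) ^ 1 * (-1) / 2 * Real.log (1 - ρ) := by ring
  rw [hd]
  exact h

lemma H16_cont (ρ : ℝ) : Continuous (H16 ρ) := by
  have hm : Continuous fun z : ℝ => z ^ 2 / 2 * Real.log z := by
    have he : (fun z : ℝ => z ^ 2 / 2 * Real.log z) = fun z => z / 2 * (z * Real.log z) := by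
      funext z; ring
    rw [he]
    exact (continuous_id.div_const 2).mul Real.continuous_mul_log
  have hm2 : Continuous fun z : ℝ => (1 - z) ^ 2 / 2 * Real.log (1 - z) := by
    have he : (fun z : ℝ => (1 - z) ^ 2 / 2 * Real.log (1 - z)) =
        (fun w : ℝ => w ^ 2 / 2 * Real.log w) ∘ fun z : ℝ => 1 - z := by
      funext z; simp [Function.comp]
    rw [he]
    exact hm.comp (continuous_const.sub continuous_id)
  unfold H16
  exact (((hm.sub ((continuous_pow 2).div_const 4)).sub
      (((continuous_pow 2).div_const 2).mul continuous_const)).sub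
      (hm2.sub (((continuous_const.sub continuous_id).pow 2).div_const 4))).add
      ((((continuous_const.sub continuous_id).pow 2).div_const 2).mul continuous_const)

/-- The relative entropy cost of the profile `prof16` is `-A log(1-ρ) - γρ`. -/
theorem stmt16 (γ ρ A : ℝ) (hγ0 : 0 < γ) (hγ1 : γ ≤ 1)
    (hρ0 : 0 < ρ) (hρ1 : ρ < 1) (hA : γ ≤ A) :
    ∫ u : ℝ, hRho ρ (prof16 γ ρ A u) = -A * Real.log (1 - ρ) - γ * ρ := by
  have h2γ : (0:ℝ) < 2 * γ := by linarith
  have h2ργ : (0:ℝ) < 2 * ρ * γ := by positivity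
  have hρne : ρ ≠ 0 := ne_of_gt hρ0
  have h1ρ : (0:ℝ) < 1 - ρ := by linarith
  have hc0 : (0:ℝ) ≤ A - γ := by linarith
  have hcb : A - γ < A - γ + 2 * ρ * γ := by linarith
  have hb0 : (0:ℝ) < A - γ + 2 * ρ * γ := by linarith
  have hRρ : hRho ρ ρ = 0 := by
    simp [hRho, div_self hρne, div_self (ne_of_gt h1ρ)]
  have hR0 : hRho ρ 0 = -Real.log (1 - ρ) := by
    simp [hRho, one_div, Real.log_inv]
  have hRho_eq : ∀ z : ℝ, hRho ρ z = (z * Real.log z - z * Real.log ρ)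
      + ((1 - z) * Real.log (1 - z) - (1 - z) * Real.log (1 - ρ)) := by
    intro z
    have e1 : z * Real.log (z / ρ) = z * Real.log z - z * Real.log ρ := by
      rcases eq_or_ne z 0 with rfl | hz
      · simp
      · rw [Real.log_div hz hρne]; ring
    have e2 : (1 - z) * Real.log ((1 - z) / (1 - ρ))
        = (1 - z) * Real.log (1 - z) - (1 - z) * Real.log (1 - ρ) := by
      rcases eq_or_ne (1 - z) 0 with h | h
      · rw [h]; simp
      · rw [Real.log_div h (ne_of_gt h1ρ)]; ring
    unfold hRho
    rw [e1, e2]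
  have hRho_cont : Continuous (hRho ρ) := by
    have he : hRho ρ = fun z => (z * Real.log z - z * Real.log ρ)
        + ((1 - z) * Real.log (1 - z) - (1 - z) * Real.log (1 - ρ)) := funext hRho_eq
    rw [he]
    have hm2 : Continuous fun z : ℝ => (1 - z) * Real.log (1 - z) :=
      Real.continuous_mul_log.comp (continuous_const.sub continuous_id)
    exact (Real.continuous_mul_log.sub (continuous_id.mul continuous_const)).add
      (hm2.sub ((continuous_const.sub continuous_id).mul continuous_const))
  -- the integrand vanishes outside `[0, b)`
  have hsupp : ∀ u ∉ Set.Ico (0:ℝ) (A - γ + 2 * ρ * γ), hRho ρ (prof16 γ ρ A u) = 0 := by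
    intro u hu
    rw [Set.mem_Ico, not_and_or, not_le, not_lt] at hu
    rcases hu with h | h
    · unfold prof16; rw [if_pos h]; exact hRρ
    · unfold prof16
      rw [if_neg (by linarith), if_neg (by linarith), if_neg (by linarith)]
      exact hRρ
  -- equality with the constant on the first interval
  have hfc : Set.EqOn (fun u => hRho ρ (prof16 γ ρ A u)) (fun _ => -Real.log (1 - ρ))
      (Set.uIcc 0 (A - γ)) := by
    rw [Set.uIcc_of_le hc0]
    intro u hu
    rcases lt_or_ge u (A - γ) with h | h
    · show hRho ρ (prof16 γ ρ A u) = _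
      unfold prof16
      rw [if_neg (not_lt.2 hu.1), if_pos h]
      exact hR0
    · have huc : u = A - γ := le_antisymm hu.2 h
      show hRho ρ (prof16 γ ρ A u) = _
      unfold prof16
      rw [if_neg (not_lt.2 hu.1), if_neg (not_lt.2 h), if_pos (by linarith [hu.2] : u < A - γ + 2 * ρ * γ),
        show u - A + γ = 0 by linarith, zero_div]
      exact hR0
  -- equality with the ramp function on the second interval
  have hfg : Set.EqOn (fun u => hRho ρ (prof16 γ ρ A u))
      (fun u => hRho ρ ((u - A + γ) / (2 * γ)))
      (Set.uIcc (A - γ) (A - γ + 2 * ρ * γ)) := by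
    rw [Set.uIcc_of_le hcb.le]
    intro u hu
    have h0 : ¬ u < 0 := not_lt.2 (le_trans hc0 hu.1)
    have h1 : ¬ u < A - γ := not_lt.2 hu.1
    rcases lt_or_ge u (A - γ + 2 * ρ * γ) with h | h
    · show hRho ρ (prof16 γ ρ A u) = _
      unfold prof16
      rw [if_neg h0, if_neg h1, if_pos h]
    · have hub : u = A - γ + 2 * ρ * γ := le_antisymm hu.2 h
      show hRho ρ (prof16 γ ρ A u) = _
      unfold prof16
      rw [if_neg h0, if_neg h1, if_neg (not_lt.2 h), hub]
      show hRho ρ ρ = hRho ρ ((A - γ + 2 * ρ * γ - A + γ) / (2 * γ))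
      rw [show A - γ + 2 * ρ * γ - A + γ = ρ * (2 * γ) by ring,
        mul_div_assoc, div_self h2γ.ne', mul_one]
  -- integrability on each interval
  have hgcont : Continuous fun u : ℝ => hRho ρ ((u - A + γ) / (2 * γ)) :=
    hRho_cont.comp (((continuous_id.sub continuous_const).add continuous_const).div_const (2 * γ))
  have hint1 : IntervalIntegrable (fun u => hRho ρ (prof16 γ ρ A u)) volume 0 (A - γ) := by
    rw [intervalIntegrable_iff]
    refine IntegrableOn.congr_fun (f := fun _ : ℝ => -Real.log (1 - ρ)) ?_
      (fun u hu => (hfc (Set.uIoc_subset_uIcc hu)).symm) measurableSet_uIoc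
    exact intervalIntegrable_iff.1 intervalIntegrable_const
  have hint2 : IntervalIntegrable (fun u => hRho ρ (prof16 γ ρ A u)) volume (A - γ)
      (A - γ + 2 * ρ * γ) := by
    rw [intervalIntegrable_iff]
    refine IntegrableOn.congr_fun (f := fun u : ℝ => hRho ρ ((u - A + γ) / (2 * γ))) ?_
      (fun u hu => (hfg (Set.uIoc_subset_uIcc hu)).symm) measurableSet_uIoc
    exact intervalIntegrable_iff.1 (hgcont.intervalIntegrable _ _)
  -- FTC on the ramp
  have hG : ∀ u ∈ Set.Ioo (A - γ) (A - γ + 2 * ρ * γ),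
      HasDerivAt (fun u => 2 * γ * H16 ρ ((u - A + γ) / (2 * γ)))
        (hRho ρ ((u - A + γ) / (2 * γ))) u := by
    intro u hu
    have hz0 : 0 < (u - A + γ) / (2 * γ) := div_pos (by linarith [hu.1]) h2γ
    have hz1 : (u - A + γ) / (2 * γ) < 1 := by
      rw [div_lt_one h2γ]
      nlinarith [hu.2]
    have hlin : HasDerivAt (fun u : ℝ => (u - A + γ) / (2 * γ)) (1 / (2 * γ)) u := by
      simpa using (((hasDerivAt_id u).sub_const A).add_const γ).div_const (2 * γ)
    have hH := ((H16_deriv ρ hz0 hz1).comp u hlin).const_mul (2 * γ)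
    have hd : hRho ρ ((u - A + γ) / (2 * γ))
        = 2 * γ * ((((u - A + γ) / (2 * γ)) * Real.log ((u - A + γ) / (2 * γ))
            - ((u - A + γ) / (2 * γ)) * Real.log ρ
            + ((1 - (u - A + γ) / (2 * γ)) * Real.log (1 - (u - A + γ) / (2 * γ))
              - (1 - (u - A + γ) / (2 * γ)) * Real.log (1 - ρ))) * (1 / (2 * γ))) := by
      rw [hRho_eq]
      field_simp
    rw [hd]
    exact hH
  have hGcont : ContinuousOn (fun u => 2 * γ * H16 ρ ((u - A + γ) / (2 * γ)))
      (Set.Icc (A - γ) (A - γ + 2 * ρ * γ)) :=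
    (continuous_const.mul ((H16_cont ρ).comp
      (((continuous_id.sub continuous_const).add continuous_const).div_const (2 * γ)))).continuousOn
  -- assemble
  rw [← setIntegral_eq_integral_of_forall_compl_eq_zero hsupp,
    integral_Ico_eq_integral_Ioo, ← integral_Ioc_eq_integral_Ioo,
    ← intervalIntegral.integral_of_le hb0.le,
    ← intervalIntegral.integral_add_adjacent_intervals hint1 hint2,
    intervalIntegral.integral_congr hfc, intervalIntegral.integral_congr hfg,
    intervalIntegral.integral_const,
    intervalIntegral.integral_eq_sub_of_hasDerivAt_of_le hcb.le hGcont hG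
      (hgcont.intervalIntegrable _ _),
    show A - γ + 2 * ρ * γ - A + γ = ρ * (2 * γ) by ring,
    mul_div_assoc, div_self h2γ.ne', mul_one,
    show A - γ - A + γ = (0:ℝ) by ring, zero_div]
  unfold H16
  simp only [Real.log_zero, Real.log_one, sub_zero, smul_eq_mul]
  ring
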